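/- arXiv:1401.0418 — 2 statements merged into one kernel-verified Lean document; each statement's English description precedes it below -/
import Mathlib

section
/- Gauss's formula: the number of monic irreducible polynomials of degree n over F_q equals (1/n) ∑_{d | n} μ(n/d) q^d, where μ is the Möbius function. -/
open Finset ArithmeticFunction Polynomial
open scoped IntermediateField

section Gauss

variable {F : Type} [Field F] [Fintype F]

private lemma pow_pow_fix {M : Type*} [Monoid M] (x : M) {a : ℕ} (h : x ^ a = x) (e : ℕ) :
    x ^ a ^ e = x := by
  induction e with
  | zero => simpa using h ▸ rfl
  | succ e ih => rw [pow_succ, pow_mul, ih, h]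

private lemma gauss_sub_lemmas : True := trivial

/-- The big polynomial `X ^ q ^ m - X` over `F`. -/
private noncomputable def gpoly (F : Type) [Field F] [Fintype F] (m : ℕ) : Polynomial F :=
  X ^ (Fintype.card F) ^ m - X

private lemma gpoly_monic (m : ℕ) (hm : m ≠ 0) : (gpoly F m).Monic := by
  have h1 : 1 < (Fintype.card F) ^ m := Nat.one_lt_pow hm Fintype.one_lt_card
  unfold gpoly
  apply monic_X_pow_sub
  rw [degree_X]
  exact_mod_cast h1

private lemma gpoly_sep (m : ℕ) (hm : m ≠ 0) : (gpoly F m).Separable := by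
  obtain ⟨p, hchar⟩ := CharP.exists F
  haveI : CharP F p := hchar
  obtain ⟨k, hp, hq⟩ := FiniteField.card F p
  have hdvd : p ∣ (Fintype.card F) ^ m := by
    rw [hq]
    exact dvd_pow (dvd_pow_self p k.ne_zero) (by positivity)
  exact galois_poly_separable p _ hdvd

private lemma aeval_gpoly {K : Type*} [CommRing K] [IsDomain K] [Algebra F K] (α : K) (m : ℕ) :
    aeval α (gpoly F m) = α ^ (Fintype.card F) ^ m - α := by
  simp [gpoly]

/-- If a monic irreducible `P` of degree dividing `m` has root `α`, then `α` is fixed by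
`x ↦ x ^ q ^ m`. -/
private lemma mem_aroots_gpoly_iff {K : Type*} [Field K] [Algebra F K] [DecidableEq K] {m : ℕ} (hm : m ≠ 0)
    (α : K) : α ∈ ((gpoly F m).aroots K).toFinset ↔ α ^ (Fintype.card F) ^ m = α := by
  rw [Multiset.mem_toFinset, mem_aroots, aeval_gpoly]
  have h0 : gpoly F m ≠ 0 := (gpoly_monic m hm).ne_zero
  simp [h0, sub_eq_zero]

private lemma card_aroots_gpoly {K : Type*} [Field K] [Algebra F K] [IsAlgClosed K] [DecidableEq K] {m : ℕ}
    (hm : m ≠ 0) : ((gpoly F m).aroots K).toFinset.card = (Fintype.card F) ^ m := by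
  have hsep : ((gpoly F m).map (algebraMap F K)).Separable := (gpoly_sep m hm).map
  rw [aroots_def, Multiset.toFinset_card_of_nodup (nodup_roots hsep),
    ← (IsAlgClosed.splits ((gpoly F m).map (algebraMap F K))).natDegree_eq_card_roots, natDegree_map]
  exact FiniteField.X_pow_card_pow_sub_X_natDegree_eq F hm Fintype.one_lt_card

private lemma fix_of_root {K : Type*} [Field K] [Algebra F K] {P : Polynomial F}
    (hP : P.Monic) (hirr : Irreducible P) {m : ℕ} (hd : P.natDegree ∣ m) {α : K}
    (hroot : aeval α P = 0) : α ^ (Fintype.card F) ^ m = α := by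
  have hint : IsIntegral F α := ⟨P, hP, hroot⟩
  have hmin : minpoly F α = P := (minpoly.eq_of_irreducible_of_monic hirr hroot hP).symm
  haveI := IntermediateField.adjoin.finiteDimensional hint
  haveI : Finite (F⟮α⟯ : IntermediateField F K) := Module.finite_of_finite F
  haveI : Fintype (F⟮α⟯ : IntermediateField F K) := Fintype.ofFinite _
  have hcard : Fintype.card (F⟮α⟯ : IntermediateField F K) = (Fintype.card F) ^ P.natDegree := by
    rw [Module.card_eq_pow_finrank (K := F), IntermediateField.adjoin.finrank hint, hmin]
  set x : (F⟮α⟯ : IntermediateField F K) := ⟨α, IntermediateField.mem_adjoin_simple_self F α⟩ with hx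
  have hpow : x ^ (Fintype.card F) ^ P.natDegree = x := by
    rw [← hcard]; exact FiniteField.pow_card x
  have hpowα : α ^ (Fintype.card F) ^ P.natDegree = α := by
    have := congrArg (Subtype.val) hpow
    simpa [hx] using this
  obtain ⟨e, rfl⟩ := hd
  rw [pow_mul]
  exact pow_pow_fix α hpowα e

/-- Conversely, fixed points have minimal polynomial of degree dividing `m`. -/
private lemma deg_dvd_of_fix {K : Type*} [Field K] [Algebra F K] [IsAlgClosed K] {m : ℕ}
    (hm : m ≠ 0) {α : K} (hfix : α ^ (Fintype.card F) ^ m = α) :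
    IsIntegral F α ∧ (minpoly F α).natDegree ∣ m := by
  letI : DecidableEq K := Classical.decEq K
  have hint : IsIntegral F α := ⟨gpoly F m, gpoly_monic m hm, by
    simpa [gpoly, sub_eq_zero] using hfix⟩
  refine ⟨hint, ?_⟩
  obtain ⟨p, hchar⟩ := CharP.exists F
  haveI : CharP F p := hchar
  obtain ⟨k, hp, hq⟩ := FiniteField.card F p
  haveI : Fact p.Prime := ⟨hp⟩
  haveI : CharP K p := charP_of_injective_algebraMap (algebraMap F K).injective p
  set S : Subfield K := RingHom.eqLocusField (iterateFrobenius K p (k * m)) (RingHom.id K) with hS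
  have hmemS : ∀ x : K, x ∈ S ↔ x ^ (Fintype.card F) ^ m = x := by
    intro x
    show iterateFrobenius K p (k * m) x = x ↔ _
    rw [iterateFrobenius_def, hq, ← pow_mul]
  have halg : ∀ y : F, algebraMap F K y ∈ S := fun y => by
    rw [hmemS, ← map_pow, FiniteField.pow_card_pow]
  set S' : IntermediateField F K := S.toIntermediateField halg with hS'
  have hle : (F⟮α⟯ : IntermediateField F K) ≤ S' := by
    rw [IntermediateField.adjoin_le_iff]
    intro x hx
    rw [Set.mem_singleton_iff] at hx
    exact hx ▸ (hmemS α).mpr hfix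
  have hSset : (S' : Set K) = (((gpoly F m).aroots K).toFinset : Set K) := by
    ext x
    rw [Finset.mem_coe, mem_aroots_gpoly_iff hm, SetLike.mem_coe]
    exact hmemS x
  have hfinS : (S' : Set K).Finite := by
    rw [hSset]; exact (((gpoly F m).aroots K).toFinset : Set K).toFinite
  haveI : Finite S' := hfinS.to_subtype
  haveI : Finite (F⟮α⟯ : IntermediateField F K) := Finite.Set.subset (S' : Set K) hle
  haveI : Fintype S' := Fintype.ofFinite _
  haveI : Fintype (F⟮α⟯ : IntermediateField F K) := Fintype.ofFinite _
  have hcS : Fintype.card S' = (Fintype.card F) ^ m := by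
    have h1 : Nat.card S' = Nat.card (S' : Set K) := rfl
    rw [← Nat.card_eq_fintype_card, h1, Nat.card_coe_set_eq, hSset,
      Set.ncard_coe_finset, card_aroots_gpoly hm]
  have hcE : Fintype.card (F⟮α⟯ : IntermediateField F K)
      = (Fintype.card F) ^ (minpoly F α).natDegree := by
    rw [Module.card_eq_pow_finrank (K := F), IntermediateField.adjoin.finrank hint]
  letI : Algebra (F⟮α⟯ : IntermediateField F K) S' :=
    (IntermediateField.inclusion hle).toRingHom.toAlgebra
  letI : Module (F⟮α⟯ : IntermediateField F K) S' := Algebra.toModule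
  have hcard := Module.card_eq_pow_finrank (K := (F⟮α⟯ : IntermediateField F K)) (V := S')
  rw [hcS, hcE, ← pow_mul] at hcard
  have hmm := Nat.pow_right_injective Fintype.one_lt_card hcard
  exact Dvd.intro _ hmm.symm

private lemma key (m : ℕ) (hm : m ≠ 0) :
    ∑ d ∈ m.divisors,
      d * Nat.card {P : Polynomial F // P.Monic ∧ Irreducible P ∧ P.natDegree = d}
      = Fintype.card F ^ m := by
  classical
  set K := AlgebraicClosure F with hK
  set T : Finset K := ((gpoly F m).aroots K).toFinset with hT
  have hmemT : ∀ α : K, α ∈ T ↔ α ^ (Fintype.card F) ^ m = α := fun α =>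
    mem_aroots_gpoly_iff hm α
  have hTcard : T.card = Fintype.card F ^ m := card_aroots_gpoly hm
  set D : Finset (Polynomial F) := T.image (fun α => minpoly F α) with hD
  have hDprop : ∀ P ∈ D, P.Monic ∧ Irreducible P ∧ P.natDegree ∣ m := by
    intro P hP
    obtain ⟨β, hβ, rfl⟩ := Finset.mem_image.mp hP
    obtain ⟨hint, hdvd⟩ := deg_dvd_of_fix hm ((hmemT β).mp hβ)
    exact ⟨minpoly.monic hint, minpoly.irreducible hint, hdvd⟩
  have hfiber : ∀ P ∈ D, (T.filter fun α => minpoly F α = P).card = P.natDegree := by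
    intro P hPD
    obtain ⟨hmonic, hirr, hdvd⟩ := hDprop P hPD
    have hfe : T.filter (fun α => minpoly F α = P) = (P.aroots K).toFinset := by
      ext α
      simp only [Finset.mem_filter, Multiset.mem_toFinset, mem_aroots]
      constructor
      · rintro ⟨hαT, rfl⟩
        have hintα : IsIntegral F α := (deg_dvd_of_fix hm ((hmemT α).mp hαT)).1
        exact ⟨minpoly.ne_zero hintα, minpoly.aeval F α⟩
      · rintro ⟨hP0, hroot⟩
        exact ⟨(hmemT α).mpr (fix_of_root hmonic hirr hdvd hroot),
          (minpoly.eq_of_irreducible_of_monic hirr hroot hmonic).symm⟩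
    rw [hfe]
    have hsep : (P.map (algebraMap F K)).Separable :=
      (PerfectField.separable_of_irreducible hirr).map
    rw [aroots_def, Multiset.toFinset_card_of_nodup (nodup_roots hsep),
      ← (IsAlgClosed.splits (P.map (algebraMap F K))).natDegree_eq_card_roots, natDegree_map]
  have hsum : T.card = ∑ P ∈ D, P.natDegree := by
    rw [Finset.card_eq_sum_card_fiberwise
      (fun α hα => Finset.mem_image_of_mem (fun α => minpoly F α) hα)]
    exact Finset.sum_congr rfl hfiber
  have hmap : ∀ P ∈ D, P.natDegree ∈ m.divisors := fun P hP =>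
    Nat.mem_divisors.mpr ⟨(hDprop P hP).2.2, hm⟩
  have hgroup : ∑ P ∈ D, P.natDegree
      = ∑ d ∈ m.divisors, ∑ P ∈ D.filter (fun P => P.natDegree = d), P.natDegree :=
    (Finset.sum_fiberwise_of_maps_to hmap _).symm
  have hinner : ∀ d ∈ m.divisors, ∑ P ∈ D.filter (fun P => P.natDegree = d), P.natDegree
      = d * (D.filter (fun P => P.natDegree = d)).card := by
    intro d _
    rw [Finset.sum_congr rfl (fun P hP => (Finset.mem_filter.mp hP).2), Finset.sum_const,
      smul_eq_mul, mul_comm]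
  have hNd : ∀ d ∈ m.divisors, (D.filter fun P => P.natDegree = d).card
      = Nat.card {P : Polynomial F // P.Monic ∧ Irreducible P ∧ P.natDegree = d} := by
    intro d hd
    have hset : (↑(D.filter fun P => P.natDegree = d) : Set (Polynomial F))
        = {P : Polynomial F | P.Monic ∧ Irreducible P ∧ P.natDegree = d} := by
      ext P
      simp only [Finset.coe_filter, Set.mem_setOf_eq]
      constructor
      · rintro ⟨hPD, hdeg⟩
        obtain ⟨h1, h2, _⟩ := hDprop P hPD
        exact ⟨h1, h2, hdeg⟩
      · rintro ⟨hmonic, hirr, hdeg⟩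
        refine ⟨?_, hdeg⟩
        have hdeg0 : P.degree ≠ 0 := by
          rw [degree_eq_natDegree hmonic.ne_zero]
          exact_mod_cast hirr.natDegree_pos.ne' 
        obtain ⟨α, hα⟩ := IsAlgClosed.exists_aeval_eq_zero K P hdeg0
        have hdvd : P.natDegree ∣ m := hdeg ▸ (Nat.mem_divisors.mp hd).1
        exact Finset.mem_image.mpr ⟨α, (hmemT α).mpr (fix_of_root hmonic hirr hdvd hα),
          (minpoly.eq_of_irreducible_of_monic hirr hα hmonic).symm⟩
    rw [← Set.ncard_coe_finset, ← Nat.card_coe_set_eq, hset]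
    rfl
  calc ∑ d ∈ m.divisors,
      d * Nat.card {P : Polynomial F // P.Monic ∧ Irreducible P ∧ P.natDegree = d}
      = ∑ d ∈ m.divisors, ∑ P ∈ D.filter (fun P => P.natDegree = d), P.natDegree := by
        refine Finset.sum_congr rfl fun d hd => ?_
        rw [hinner d hd, hNd d hd]
    _ = ∑ P ∈ D, P.natDegree := hgroup.symm
    _ = Fintype.card F ^ m := by rw [← hsum, hTcard]

end Gauss

/-- Gauss's formula: the number of monic irreducible polynomials of degree `n` over a
finite field with `q` elements equals `(1/n) ∑_{d ∣ n} μ(n/d) q^d`. -/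
theorem gauss_formula {F : Type} [Field F] [Fintype F] (n : ℕ) (hn : 1 ≤ n) :
    (n : ℤ) * (Nat.card {P : Polynomial F // P.Monic ∧ Irreducible P ∧ P.natDegree = n} : ℤ)
      = ∑ d ∈ n.divisors, (moebius (n / d) : ℤ) * (Fintype.card F : ℤ) ^ d := by
  set N : ℕ → ℕ := fun d => Nat.card {P : Polynomial F // P.Monic ∧ Irreducible P ∧ P.natDegree = d} with hN
  have H : ∀ k > 0, ∑ d ∈ Nat.divisors k, ((d : ℤ) * (N d : ℤ)) = ((Fintype.card F : ℤ)) ^ k := by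
    intro k hk
    have h := key (F := F) k hk.ne'
    rw [hN]
    exact_mod_cast h
  have h2 := (sum_eq_iff_sum_smul_moebius_eq (f := fun d => (d : ℤ) * (N d : ℤ))
      (g := fun k => (Fintype.card F : ℤ) ^ k)).mp H n hn
  rw [← h2, Nat.sum_divisorsAntidiagonal' (f := fun a b => (moebius a : ℤ) • (Fintype.card F : ℤ) ^ b)]
  simp [zsmul_eq_mul]
end

section
/- Quadratic reciprocity for F_q[T] (q odd): if A, B ∈ F_q[T] are nonzero, relatively prime, and monic, then (A/B)(B/A) = (-1)^{((q-1)/2)·deg(A)·deg(B)}, where (·/·) is the Jacobi (quadratic residue) symbol for polynomials. In particular, if q ≡ 1 (mod 4), then (A/B) = (B/A). -/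
open scoped Classical in
/-- The quadratic residue (Legendre) symbol `(f/P)` for polynomials over a finite field:
`0` if `P ∣ f`, `1` if `f` is a square mod `P`, and `-1` otherwise. -/
noncomputable def polyLegendre {F : Type} [Field F] [Fintype F] (f P : Polynomial F) : ℤ :=
  if P ∣ f then 0 else if ∃ g : Polynomial F, P ∣ (g ^ 2 - f) then 1 else -1

/-- The Jacobi symbol `(f/B)` for polynomials, extended multiplicatively over the
irreducible factors of `B`. -/
noncomputable def polyJacobi {F : Type} [Field F] [Fintype F] (f B : Polynomial F) : ℤ :=
  ((UniqueFactorizationMonoid.factors B).map (polyLegendre f)).prod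

set_option linter.unusedSectionVars false
set_option linter.unusedVariables false

open Polynomial

namespace PolyQR

open scoped Classical

variable {K : Type*} [Field K]

noncomputable def sgn (e : ℕ) (x : K) : ℤ :=
  if x ^ e = 1 then 1 else if x ^ e = -1 then -1 else 0

def Good (e : ℕ) (x : K) : Prop := x ^ e = 1 ∨ x ^ e = -1

lemma good_mul {e : ℕ} {x y : K} (hx : Good e x) (hy : Good e y) : Good e (x * y) := by
  rcases hx with h | h <;> rcases hy with h' | h' <;> simp [Good, mul_pow, h, h']

lemma sgn_mul (hK : (-1 : K) ≠ 1) {e : ℕ} {x y : K} (hx : Good e x) (hy : Good e y) :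
    sgn e (x * y) = sgn e x * sgn e y := by
  rcases hx with h | h <;> rcases hy with h' | h' <;>
    simp [sgn, mul_pow, h, h', hK]

lemma sgn_prod (hK : (-1 : K) ≠ 1) (e : ℕ) (m : Multiset K) (h : ∀ x ∈ m, Good e x) :
    Good e m.prod ∧ sgn e m.prod = (m.map (sgn e)).prod := by
  induction m using Multiset.induction with
  | empty => simp [Good, sgn]
  | cons a s ih =>
      have ha := h a (Multiset.mem_cons_self a s)
      obtain ⟨hg, hs⟩ := ih fun x hx => h x (Multiset.mem_cons_of_mem hx)
      refine ⟨by rw [Multiset.prod_cons]; exact good_mul ha hg, ?_⟩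
      rw [Multiset.prod_cons, Multiset.map_cons, Multiset.prod_cons, sgn_mul hK ha hg, hs]

lemma sgn_eq_one_or (hK : (-1 : K) ≠ 1) {e : ℕ} {x : K} (hx : Good e x) :
    sgn e x = 1 ∨ sgn e x = -1 := by
  rcases hx with h | h <;> simp [sgn, h, hK]

lemma sgn_sq (hK : (-1 : K) ≠ 1) {e : ℕ} {x : K} (hx : Good e x) :
    sgn e (x * x) = 1 := by
  have h1 : (x * x) ^ e = 1 := by
    rcases hx with h | h <;> rw [mul_pow, h] <;> ring
  simp [sgn, h1]

lemma good_neg_one_pow (hK : (-1 : K) ≠ 1) (e m : ℕ) : Good e ((-1 : K) ^ m) := by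
  rw [Good, ← pow_mul]
  rcases Nat.even_or_odd (m * e) with h | h
  · exact Or.inl h.neg_one_pow
  · exact Or.inr h.neg_one_pow

lemma sgn_neg_one_pow (hK : (-1 : K) ≠ 1) (e m : ℕ) :
    sgn e ((-1 : K) ^ m) = (-1 : ℤ) ^ (e * m) := by
  rcases Nat.even_or_odd (e * m) with h | h
  · have h1 : ((-1 : K) ^ m) ^ e = 1 := by
      rw [← pow_mul, mul_comm]; exact h.neg_one_pow
    simp [sgn, h1, h.neg_one_pow]
  · have h1 : ((-1 : K) ^ m) ^ e = -1 := by
      rw [← pow_mul, mul_comm]; exact h.neg_one_pow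
    simp [sgn, h1, hK, h.neg_one_pow]

lemma multiset_prod_comm {α β : Type*} (m : Multiset α) (n : Multiset β) (f : α → β → K) :
    (m.map fun a => (n.map fun b => f a b).prod).prod
      = (n.map fun b => (m.map fun a => f a b).prod).prod := by
  induction m using Multiset.induction with
  | empty => simp
  | cons a s ih => simp [ih, ← Multiset.prod_map_mul]

variable {F : Type} [Field F] [Fintype F]

/-- A resultant-like product: `∏_{β root of B in the algebraic closure} A(β)`. -/
noncomputable def rsl (A B : Polynomial F) : AlgebraicClosure F :=
  ((B.map (algebraMap F (AlgebraicClosure F))).roots.map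
    fun β => (A.map (algebraMap F (AlgebraicClosure F))).eval β).prod

lemma rsl_C_mul_right (A B : Polynomial F) {c : F} (hc : c ≠ 0) :
    rsl A (C c * B) = rsl A B := by
  simp only [rsl, Polynomial.map_mul, map_C]
  rw [roots_C_mul _ (by simpa using hc)]

lemma rsl_prod_right (A : Polynomial F) (m : Multiset (Polynomial F))
    (hm : (0 : Polynomial F) ∉ m) :
    rsl A m.prod = (m.map (rsl A)).prod := by
  set ι := algebraMap F (AlgebraicClosure F)
  have h0 : (0 : Polynomial (AlgebraicClosure F)) ∉ m.map (Polynomial.map ι) := by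
    intro h
    obtain ⟨p, hp, hp0⟩ := Multiset.mem_map.1 h
    have : p = 0 := (Polynomial.map_eq_zero ι).1 hp0
    exact hm (this ▸ hp)
  have hmp : (m.prod).map ι = (m.map (Polynomial.map ι)).prod := by
    rw [← Polynomial.coe_mapRingHom, map_multiset_prod]
  rw [rsl, hmp, roots_multiset_prod _ h0, Multiset.map_bind, Multiset.prod_bind,
    Multiset.map_map]
  rfl

lemma rsl_swap (A B : Polynomial F) (hA : A.Monic) (hB : B.Monic) :
    rsl A B = (-1) ^ (A.natDegree * B.natDegree) * rsl B A := by
  set ι := algebraMap F (AlgebraicClosure F)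
  have hev : ∀ (p : Polynomial F), p.Monic → ∀ z : AlgebraicClosure F,
      (p.map ι).eval z = ((p.map ι).roots.map fun α => z - α).prod := by
    intro p hp z
    conv_lhs => rw [(IsAlgClosed.splits (p.map ι)).eq_prod_roots_of_monic (hp.map ι)]
    rw [eval_multiset_prod, Multiset.map_map]
    simp
  have hcardA : ((A.map ι).roots).card = A.natDegree := by
    exact IsAlgClosed.card_roots_map_eq_natDegree_from_simpleRing ι A
  have hcardB : ((B.map ι).roots).card = B.natDegree := by
    exact IsAlgClosed.card_roots_map_eq_natDegree_from_simpleRing ι B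
  calc rsl A B = ((B.map ι).roots.map fun β => ((A.map ι).roots.map fun α => β - α).prod).prod := by
        simp only [rsl]
        exact congrArg _ (Multiset.map_congr rfl fun β _ => hev A hA β)
    _ = ((A.map ι).roots.map fun α => ((B.map ι).roots.map fun β => β - α).prod).prod := by
        rw [multiset_prod_comm]
    _ = ((A.map ι).roots.map fun α =>
          (-1 : AlgebraicClosure F) ^ B.natDegree * ((B.map ι).roots.map fun β => α - β).prod).prod := by
        refine congrArg _ (Multiset.map_congr rfl fun α _ => ?_)
        have : ((B.map ι).roots.map fun β => β - α)
            = ((B.map ι).roots.map fun β => -1 * (α - β)) := by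
          refine Multiset.map_congr rfl fun β _ => by ring
        rw [this, Multiset.prod_map_mul, Multiset.map_const', Multiset.prod_replicate, hcardB]
    _ = (-1) ^ (A.natDegree * B.natDegree) * rsl B A := by
        rw [Multiset.prod_map_mul, Multiset.map_const', Multiset.prod_replicate, hcardA,
          ← pow_mul, mul_comm B.natDegree]
        congr 1
        simp only [rsl]
        exact congrArg _ (Multiset.map_congr rfl fun α _ => (hev B hB α).symm)

lemma neg_one_ne_one_closure (hq : Odd (Fintype.card F)) :
    (-1 : AlgebraicClosure F) ≠ 1 := by
  have hchar : ringChar F ≠ 2 := by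
    intro h
    have h2 := FiniteField.even_card_of_char_two h
    have h1 := Nat.odd_iff.1 hq
    omega
  have hF : (-1 : F) ≠ 1 := Ring.neg_one_ne_one_of_char_ne_two hchar
  intro h
  apply hF
  apply (algebraMap F (AlgebraicClosure F)).injective
  rw [map_neg, map_one]
  simpa using h

set_option maxHeartbeats 1000000 in
theorem core (hq : Odd (Fintype.card F)) {P f : Polynomial F}
    (hP : Irreducible P) (hPf : ¬ P ∣ f) :
    (rsl f P) ^ ((Fintype.card F - 1) / 2) =
      (if ∃ g : Polynomial F, P ∣ (g ^ 2 - f) then 1 else -1 : AlgebraicClosure F) := by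
  classical
  set q := Fintype.card F with hqdef
  set Kc := AlgebraicClosure F
  set ι : F →+* Kc := algebraMap F Kc with hι
  set p := ringChar F with hpdef
  haveI hchF : CharP F p := ringChar.charP F
  obtain ⟨n, hp, hq_eq⟩ := FiniteField.card F p
  haveI : Fact p.Prime := ⟨hp⟩
  have hq_eq' : q = p ^ (n : ℕ) := hqdef.trans hq_eq
  have hp2 : p ≠ 2 := by
    intro h
    have : Even q := by
      rw [hqdef, hq_eq, h]; exact (Nat.even_pow.2 ⟨even_two, by positivity⟩)
    exact (Nat.not_even_iff_odd.2 hq) this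
  haveI hchK : CharP Kc p := charP_of_injective_algebraMap (algebraMap F Kc).injective p
  haveI : ExpChar Kc p := ExpChar.prime hp
  have hK1 : (-1 : Kc) ≠ 1 := by
    haveI : Fact (2 < p) := ⟨lt_of_le_of_ne hp.two_le (Ne.symm hp2)⟩
    exact CharP.neg_one_ne_one Kc p
  haveI : Fact (Irreducible P) := ⟨hP⟩
  set L := AdjoinRoot P with hLdef
  haveI : CharP L p := charP_of_injective_algebraMap (algebraMap F L).injective p
  haveI : ExpChar L p := ExpChar.prime hp
  haveI : FiniteDimensional F L :=
    Module.Finite.of_basis (AdjoinRoot.powerBasis hP.ne_zero).basis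
  haveI : Finite L := Module.finite_of_finite F
  haveI : Fintype L := Fintype.ofFinite L
  set d := P.natDegree with hddef
  have hd0 : 0 < d := hP.natDegree_pos
  have hcardL : Fintype.card L = q ^ d := by
    rw [Module.card_eq_pow_finrank (K := F) (V := L)]
    congr 1
    rw [(AdjoinRoot.powerBasis hP.ne_zero).finrank, AdjoinRoot.powerBasis_dim]
  have hq1 : 1 < q := Fintype.one_lt_card
  have hLodd : Odd (Fintype.card L) := by
    rw [hcardL]; exact hq.pow
  have hchL2 : ringChar L ≠ 2 := by
    rw [ringChar.eq L p]; exact hp2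
  -- root of P in Kc
  have hPmap0 : P.map ι ≠ 0 := by
    simpa using hP.ne_zero
  obtain ⟨β, hβ⟩ := IsAlgClosed.exists_root (P.map ι) (by
    rw [degree_map, degree_eq_natDegree hP.ne_zero]
    exact_mod_cast hd0.ne')
  have hβ' : eval₂ ι β P = 0 := by rwa [← eval_map]
  set φ : L →+* Kc := AdjoinRoot.lift ι β hβ' with hφdef
  have hφinj : Function.Injective φ := φ.injective
  set x : L := AdjoinRoot.mk P f with hxdef
  have hx0 : x ≠ 0 := by rwa [hxdef, Ne, AdjoinRoot.mk_eq_zero]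
  set y : Kc := φ x with hydef
  have hy : y = (f.map ι).eval β := by
    rw [hydef, hxdef, AdjoinRoot.lift_mk, eval_map]
  have hy0 : y ≠ 0 := fun h => hx0 (hφinj (by rw [map_zero]; exact h))
  -- Frobenius
  set σ : Kc →+* Kc := iterateFrobenius Kc p n with hσdef
  have hσ : ∀ z : Kc, σ z = z ^ q := by
    intro z; rw [hσdef, iterateFrobenius_def, ← hq_eq]
  have hσι : ∀ c : F, σ (ι c) = ι c := by
    intro c; rw [hσ, ← map_pow, FiniteField.pow_card]
  have hev : ∀ (g : Polynomial F) (z : Kc), σ ((g.map ι).eval z) = (g.map ι).eval (σ z) := by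
    intro g z
    rw [eval_map, eval_map, hom_eval₂]
    congr 1
    exact RingHom.ext fun c => hσι c
  -- roots of P
  set S := (P.map ι).roots with hSdef
  have hScard : S.card = d :=
    IsAlgClosed.card_roots_map_eq_natDegree_from_simpleRing ι P
  have hβS : β ∈ S := by
    rw [hSdef, mem_roots hPmap0]; exact hβ
  have hstab : ∀ z : Kc, z ∈ S → σ z ∈ S := by
    intro z hz
    rw [hSdef, mem_roots hPmap0] at hz ⊢
    show (P.map ι).eval (σ z) = 0
    rw [← hev P z, hz, map_zero]
  set b : ℕ → Kc := fun i => β ^ q ^ i with hbdef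
  have hb0 : b 0 = β := by simp [hbdef]
  have hbs : ∀ i, b (i + 1) = σ (b i) := by
    intro i
    rw [hσ, hbdef]
    simp only []
    rw [← pow_mul, ← pow_succ]
  have hbS : ∀ i, b i ∈ S := by
    intro i
    induction i with
    | zero => rw [hb0]; exact hβS
    | succ i ih => rw [hbs]; exact hstab _ ih
  have hinj : ∀ i < d, ∀ j < d, b i = b j → i = j := by
    suffices H : ∀ i j, i < j → j < d → b i ≠ b j by
      intro i hi j hj hij
      rcases lt_trichotomy i j with h | h | h
      · exact absurd hij (H i j h hj)
      · exact h
      · exact absurd hij.symm (H j i h hi)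
    intro i j hij hjd hbe
    set m := j - i with hm
    have hm0 : 0 < m := by omega
    have hmd : m < d := by omega
    have hσi_inj : Function.Injective (fun z : Kc => z ^ q ^ i) := by
      have heq : (fun z : Kc => z ^ q ^ i) = (iterateFrobenius Kc p ((n : ℕ) * i) : Kc →+* Kc) := by
        funext z
        rw [iterateFrobenius_def, hq_eq', ← pow_mul]
      rw [heq]
      exact (iterateFrobenius Kc p ((n : ℕ) * i)).injective
    have hβm : β ^ q ^ m = β := by
      apply hσi_inj
      show (β ^ q ^ m) ^ q ^ i = β ^ q ^ i
      rw [← pow_mul, ← pow_add]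
      have hmi : m + i = j := by omega
      rw [hmi]
      exact hbe.symm
    have hroot : (AdjoinRoot.root P) ^ q ^ m = AdjoinRoot.root P := by
      apply hφinj
      rw [map_pow, AdjoinRoot.lift_root, hβm]
    have hqm_eq : q ^ m = p ^ ((n : ℕ) * m) := by rw [hq_eq', ← pow_mul]
    have hqm1 : 1 < q ^ m := Nat.one_lt_pow hm0.ne' hq1
    let Sub : Subalgebra F L :=
      { carrier := {z : L | z ^ q ^ m = z}
        mul_mem' := by
          intro a b ha hb
          simp only [Set.mem_setOf_eq] at *
          rw [mul_pow, ha, hb]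
        one_mem' := by simp
        add_mem' := by
          intro a b ha hb
          simp only [Set.mem_setOf_eq] at *
          rw [hqm_eq, add_pow_char_pow, ← hqm_eq, ha, hb]
        zero_mem' := by
          simp only [Set.mem_setOf_eq]
          exact zero_pow (by positivity)
        algebraMap_mem' := by
          intro c
          simp only [Set.mem_setOf_eq]
          rw [← map_pow, FiniteField.pow_card_pow] }
    have hSubtop : ∀ z : L, z ^ q ^ m = z := by
      have hle : Algebra.adjoin F ({AdjoinRoot.root P} : Set L) ≤ Sub :=
        Algebra.adjoin_le (Set.singleton_subset_iff.2 hroot)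
      rw [AdjoinRoot.adjoinRoot_eq_top] at hle
      intro z
      exact hle (Algebra.mem_top (R := F) (A := L))
    have hcount : Fintype.card L ≤ q ^ m := by
      set g : Polynomial L := X ^ (q ^ m) - X with hg
      have hgm : g.Monic := monic_X_pow_sub (by
        rw [degree_X]
        exact_mod_cast hqm1)
      have hg0 : g ≠ 0 := hgm.ne_zero
      have hgdeg : g.natDegree = q ^ m := by
        rw [hg, natDegree_sub_eq_left_of_natDegree_lt, natDegree_X_pow]
        rw [natDegree_X, natDegree_X_pow]
        exact hqm1
      have hall : ∀ z : L, z ∈ g.roots := by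
        intro z
        rw [mem_roots hg0]
        show g.eval z = 0
        rw [hg]
        simp [hSubtop z]
      have hsub : (Finset.univ : Finset L) ⊆ g.roots.toFinset :=
        fun z _ => Multiset.mem_toFinset.2 (hall z)
      have h1 := Finset.card_le_card hsub
      have h2 : g.roots.toFinset.card ≤ Multiset.card g.roots := Multiset.toFinset_card_le _
      have h3 := g.card_roots'
      rw [Finset.card_univ] at h1
      omega
    rw [hcardL] at hcount
    exact absurd hcount (not_le.2 (Nat.pow_lt_pow_right hq1 hmd))
  have hSeq : S = (Multiset.range d).map b := by
    have hnodupS : S.Nodup :=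
      nodup_roots ((PerfectField.separable_of_irreducible hP).map (f := ι))
    have hnodupM : ((Multiset.range d).map b).Nodup :=
      (Multiset.nodup_range d).map_on fun i hi j hj hij =>
        hinj i (Multiset.mem_range.1 hi) j (Multiset.mem_range.1 hj) hij
    symm
    apply Multiset.eq_of_le_of_card_le
    · refine (Multiset.le_iff_subset hnodupM).2 ?_
      intro z hz
      obtain ⟨i, hi, rfl⟩ := Multiset.mem_map.1 hz
      exact hbS i
    · rw [hScard, Multiset.card_map, Multiset.card_range]
  have heval_b : ∀ i, (f.map ι).eval (b i) = y ^ q ^ i := by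
    intro i
    induction i with
    | zero => rw [hb0, hy]; simp
    | succ i ih =>
        rw [hbs, ← hev, ih, hσ, ← pow_mul, ← pow_succ]
  have hrsl : rsl f P = y ^ (∑ i ∈ Finset.range d, q ^ i) := by
    have hre : rsl f P = (S.map fun z => (f.map ι).eval z).prod := rfl
    rw [hre, hSeq, Multiset.map_map]
    have hmc : (Multiset.range d).map ((fun z => (f.map ι).eval z) ∘ b)
        = (Multiset.range d).map fun i => y ^ q ^ i :=
      Multiset.map_congr rfl fun i _ => heval_b i
    rw [hmc]
    rw [show Multiset.range d = (Finset.range d).val from rfl, ← Finset.prod_eq_multiset_prod,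
      Finset.prod_pow_eq_pow_sum]
  set c := ∑ i ∈ Finset.range d, q ^ i with hcdef
  have hgeom : (q - 1) * c = q ^ d - 1 := by
    rw [hcdef]
    induction d with
    | zero => simp
    | succ k ih =>
        rw [Finset.sum_range_succ, Nat.mul_add, ih, Nat.sub_mul, one_mul, pow_succ]
        have hqk : 1 ≤ q ^ k := Nat.one_le_pow _ _ (by omega)
        have hqk2 : q ^ k ≤ q * q ^ k := Nat.le_mul_of_pos_left _ (by omega)
        have : q ^ k * q = q * q ^ k := by ring
        omega
  have he2 : 2 * ((q - 1) / 2) = q - 1 := by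
    obtain ⟨k, hk⟩ := hq
    omega
  have hce : c * ((q - 1) / 2) = Fintype.card L / 2 := by
    have hqd1 : 1 ≤ q ^ d := Nat.one_le_pow _ _ (by omega)
    have hodd : q ^ d % 2 = 1 := by
      have h' := hLodd
      rw [hcardL] at h'
      exact Nat.odd_iff.1 h'
    have h2 : 2 * (c * ((q - 1) / 2)) = q ^ d - 1 := by
      calc 2 * (c * ((q - 1) / 2)) = c * (2 * ((q - 1) / 2)) := by ring
        _ = c * (q - 1) := by rw [he2]
        _ = q ^ d - 1 := by rw [mul_comm]; exact hgeom
    rw [hcardL]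
    omega
  have hdich := FiniteField.pow_dichotomy hchL2 hx0
  have hsq := FiniteField.isSquare_iff hchL2 hx0
  have hkey : rsl f P ^ ((q - 1) / 2) = φ (x ^ (Fintype.card L / 2)) := by
    rw [hrsl, ← pow_mul, map_pow, hce]
  have hsq' : (∃ g : Polynomial F, P ∣ g ^ 2 - f) ↔ IsSquare x := by
    constructor
    · rintro ⟨g, hg⟩
      refine ⟨AdjoinRoot.mk P g, ?_⟩
      have h0 : AdjoinRoot.mk P (g ^ 2 - f) = 0 := AdjoinRoot.mk_eq_zero.2 hg
      rw [map_sub, map_pow, sub_eq_zero] at h0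
      rw [hxdef, ← h0, sq]
    · rintro ⟨r, hr⟩
      obtain ⟨g, rfl⟩ := AdjoinRoot.mk_surjective r
      refine ⟨g, AdjoinRoot.mk_eq_zero.1 ?_⟩
      rw [map_sub, map_pow, sub_eq_zero, ← hxdef, hr, sq]
  by_cases hs : ∃ g : Polynomial F, P ∣ g ^ 2 - f
  · rw [if_pos hs]
    have h1 : x ^ (Fintype.card L / 2) = 1 := hsq.1 (hsq'.1 hs)
    rw [hkey, h1, map_one]
  · rw [if_neg hs]
    have hx1 : x ^ (Fintype.card L / 2) = -1 := by
      rcases hdich with h | h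
      · exact absurd (hsq'.2 (hsq.2 h)) hs
      · exact h
    rw [hkey, hx1, map_neg, map_one]

lemma legendre_eq (hq : Odd (Fintype.card F)) {P f : Polynomial F}
    (hP : Irreducible P) (hPf : ¬ P ∣ f) :
    Good ((Fintype.card F - 1) / 2) (rsl f P) ∧
      polyLegendre f P = sgn ((Fintype.card F - 1) / 2) (rsl f P) := by
  have hK1 := neg_one_ne_one_closure hq
  have hc := core hq hP hPf
  by_cases hs : ∃ g : Polynomial F, P ∣ g ^ 2 - f
  · rw [if_pos hs] at hc
    constructor
    · exact Or.inl hc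
    · rw [polyLegendre, if_neg hPf, if_pos hs]
      simp [sgn, hc]
  · rw [if_neg hs] at hc
    constructor
    · exact Or.inr hc
    · rw [polyLegendre, if_neg hPf, if_neg hs]
      simp [sgn, hc, hK1]

lemma jacobi_eq (hq : Odd (Fintype.card F)) {A B : Polynomial F} (hB0 : B ≠ 0)
    (hAB : IsCoprime A B) :
    Good ((Fintype.card F - 1) / 2) (rsl A B) ∧
      polyJacobi A B = sgn ((Fintype.card F - 1) / 2) (rsl A B) := by
  classical
  have hK1 := neg_one_ne_one_closure hq
  set e := (Fintype.card F - 1) / 2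
  set fs := UniqueFactorizationMonoid.factors B with hfs
  obtain ⟨u, hu⟩ := UniqueFactorizationMonoid.factors_prod hB0
  obtain ⟨cu, hcu, hCc⟩ := Polynomial.isUnit_iff.1 u.isUnit
  have hc0 : cu ≠ 0 := hcu.ne_zero
  have hBfac : B = C cu * fs.prod := by
    rw [← hu, ← hCc]; ring
  have h0fs : (0 : Polynomial F) ∉ fs := by
    intro h
    exact (UniqueFactorizationMonoid.prime_of_factor 0 h).ne_zero rfl
  have hrslB : rsl A B = (fs.map (rsl A)).prod := by
    rw [hBfac, rsl_C_mul_right A _ hc0, rsl_prod_right A fs h0fs]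
  have hper : ∀ P ∈ fs, Good e (rsl A P) ∧ polyLegendre A P = sgn e (rsl A P) := by
    intro P hPmem
    have hirr := UniqueFactorizationMonoid.irreducible_of_factor P hPmem
    have hdvd : P ∣ B := UniqueFactorizationMonoid.dvd_of_mem_factors hPmem
    have hPA : ¬ P ∣ A := fun h => hirr.not_isUnit (hAB.isUnit_of_dvd' h hdvd)
    exact legendre_eq hq hirr hPA
  obtain ⟨hgood, hsgn⟩ := sgn_prod hK1 e (fs.map (rsl A)) (by
    intro z hz
    obtain ⟨P, hPmem, rfl⟩ := Multiset.mem_map.1 hz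
    exact (hper P hPmem).1)
  constructor
  · rw [hrslB]; exact hgood
  · rw [hrslB, polyJacobi, hsgn, Multiset.map_map]
    exact congrArg _ (Multiset.map_congr rfl fun P hPmem => (hper P hPmem).2)

end PolyQR

/-- Quadratic reciprocity for `F_q[T]` with `q` odd: for `A, B` monic, nonzero and
coprime, `(A/B)(B/A) = (-1)^{((q-1)/2)·deg A·deg B}`; in particular if `q ≡ 1 (mod 4)`
then `(A/B) = (B/A)`. -/
theorem poly_quadratic_reciprocity {F : Type} [Field F] [Fintype F]
    (hq : Odd (Fintype.card F)) (A B : Polynomial F) (hA0 : A ≠ 0) (hB0 : B ≠ 0)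
    (hA : A.Monic) (hB : B.Monic) (hAB : IsCoprime A B) :
    polyJacobi A B * polyJacobi B A
        = (-1) ^ (((Fintype.card F - 1) / 2) * A.natDegree * B.natDegree) ∧
      (Fintype.card F % 4 = 1 → polyJacobi A B = polyJacobi B A) := by
  classical
  have hK1 := PolyQR.neg_one_ne_one_closure hq
  set e := (Fintype.card F - 1) / 2 with hedef
  obtain ⟨h1good, h1⟩ := PolyQR.jacobi_eq hq hB0 hAB
  obtain ⟨h2good, h2⟩ := PolyQR.jacobi_eq hq hA0 hAB.symm
  have hmain : polyJacobi A B * polyJacobi B A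
      = (-1) ^ (e * A.natDegree * B.natDegree) := by
    rw [h1, h2, ← PolyQR.sgn_mul hK1 h1good h2good]
    rw [PolyQR.rsl_swap A B hA hB, mul_assoc]
    rw [PolyQR.sgn_mul hK1 (PolyQR.good_neg_one_pow hK1 e _) (PolyQR.good_mul h2good h2good)]
    rw [PolyQR.sgn_sq hK1 h2good, mul_one, PolyQR.sgn_neg_one_pow hK1, ← mul_assoc]
  refine ⟨hmain, ?_⟩
  intro h4
  have heeven : Even e := by
    rw [hedef]
    have : (Fintype.card F - 1) % 4 = 0 := by omega
    refine Nat.even_iff.2 ?_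
    omega
  have hone : polyJacobi A B * polyJacobi B A = 1 := by
    rw [hmain]
    exact Even.neg_one_pow ((heeven.mul_right A.natDegree).mul_right B.natDegree)
  have ha := PolyQR.sgn_eq_one_or hK1 h1good
  have hb := PolyQR.sgn_eq_one_or hK1 h2good
  rw [← h1] at ha
  rw [← h2] at hb
  rcases ha with ha | ha <;> rcases hb with hb | hb <;>
    rw [ha, hb] at hone ⊢ <;> omega
end
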